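/- Suppose the regularity assumption (RA) holds and {d ∈ ℝ^n_+ : dᵀAd ≤ 0, a_jᵀd = 0 for all j = 1, …, m, and d_i = 0 for all 1 ≤ i ≤ s} = {0}. Then ({0_{ℝ^{4m+2s}}} × ℝ) ∩ cl conv 𝒜_{P_D} = ({0_{ℝ^{4m+2s}}} × ℝ) ∩ 𝒜_{P_D}; that is, the continuous reformulation (P_D) of the mixed integer quadratic program (P_M) is convexifiable. -/

import Mathlib

open Pointwise Matrix Filter Topology

private lemma carath_pack' {E : Type*} [NormedAddCommGroup E] [NormedSpace ℝ E]
    [FiniteDimensional ℝ E]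
    {S : Set E} (y₀ : E) (hy₀ : y₀ ∈ S) {z : E} (hz : z ∈ convexHull ℝ S) :
    ∃ (w : Fin (Module.finrank ℝ E + 1) → ℝ) (y : Fin (Module.finrank ℝ E + 1) → E),
      (∀ d, 0 ≤ w d) ∧ ∑ d, w d = 1 ∧ (∀ d, y d ∈ S) ∧ ∑ d, w d • y d = z := by
  classical
  obtain ⟨ι, hι, zz, ww, hrange, hai, hwpos, hwsum, hzsum⟩ :=
    eq_pos_convex_span_of_mem_convexHull hz
  set D := Module.finrank ℝ E + 1 with hDdef
  have hcard : Fintype.card ι ≤ D := by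
    have h1 := hai.card_le_finrank_succ
    have h2 : Module.finrank ℝ (vectorSpan ℝ (Set.range zz)) ≤ Module.finrank ℝ E :=
      Submodule.finrank_le _
    omega
  set c := Fintype.card ι with hc
  let e : ι ≃ Fin c := Fintype.equivFin ι
  let W : ℕ → ℝ := fun j => if h : j < c then ww (e.symm ⟨j, h⟩) else 0
  let Y : ℕ → E := fun j => if h : j < c then zz (e.symm ⟨j, h⟩) else y₀
  have hWzero : ∀ j ∈ Finset.range D, j ∉ Finset.range c → W j = 0 := by
    intro j _ hj
    simp only [Finset.mem_range] at hj
    exact dif_neg hj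
  refine ⟨fun d => W d.1, fun d => Y d.1, ?_, ?_, ?_, ?_⟩
  · intro d
    simp only [W]
    split
    · exact (hwpos _).le
    · exact le_rfl
  · rw [Fin.sum_univ_eq_sum_range W D,
      ← Finset.sum_subset (Finset.range_subset_range.2 hcard) hWzero,
      ← Fin.sum_univ_eq_sum_range W c, ← hwsum]
    refine Fintype.sum_equiv e.symm (fun i : Fin c => W i.1) ww (fun i => ?_)
    simp only [W, Fin.eta, dif_pos i.isLt]
  · intro d
    simp only [Y]
    split
    · exact hrange (Set.mem_range_self _)
    · exact hy₀
  · rw [Fin.sum_univ_eq_sum_range (fun j => W j • Y j) D,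
      ← Finset.sum_subset (Finset.range_subset_range.2 hcard)
        (fun j hj hj2 => by rw [hWzero j hj hj2, zero_smul]),
      ← Fin.sum_univ_eq_sum_range (fun j => W j • Y j) c, ← hzsum]
    refine Fintype.sum_equiv e.symm (fun i : Fin c => W i.1 • Y i.1)
      (fun i => ww i • zz i) (fun i => ?_)
    simp only [W, Y, Fin.eta, dif_pos i.isLt]

private lemma cont_dot' {n : ℕ} (v : Fin n → ℝ) : Continuous fun x : Fin n → ℝ => v ⬝ᵥ x := by
  simp only [dotProduct]
  exact continuous_finset_sum _ fun i _ => continuous_const.mul (continuous_apply i)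

private lemma cont_quad' {n : ℕ} (A : Matrix (Fin n) (Fin n) ℝ) :
    Continuous fun x : Fin n → ℝ => x ⬝ᵥ A *ᵥ x := by
  simp only [dotProduct, Matrix.mulVec]
  exact continuous_finset_sum _ fun i _ =>
    (continuous_apply i).mul (continuous_finset_sum _ fun j _ =>
      continuous_const.mul (continuous_apply j))

private lemma quad_smul' {n : ℕ} (A : Matrix (Fin n) (Fin n) ℝ) (c : ℝ) (x : Fin n → ℝ) :
    (c • x) ⬝ᵥ A *ᵥ (c • x) = c ^ 2 * (x ⬝ᵥ A *ᵥ x) := by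
  rw [smul_dotProduct, Matrix.mulVec_smul, dotProduct_smul]
  simp [smul_eq_mul]; ring

private lemma dot_nonneg' {n : ℕ} (x : Fin n → ℝ) : 0 ≤ x ⬝ᵥ x :=
  Finset.sum_nonneg fun i _ => mul_self_nonneg _

private lemma sq_le_dot' {n : ℕ} (x : Fin n → ℝ) (i : Fin n) : x i ^ 2 ≤ x ⬝ᵥ x := by
  have := Finset.single_le_sum (f := fun j => x j * x j)
    (fun j _ => mul_self_nonneg (x j)) (Finset.mem_univ i)
  simpa [dotProduct, pow_two] using this

private lemma amgm' (τ u v : ℝ) (hτ : 0 < τ) : -(τ * u ^ 2) - v ^ 2 / (4 * τ) ≤ u * v := by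
  have h4 : (0:ℝ) < 4 * τ := by linarith
  have key : u * v - (-(τ * u ^ 2) - v ^ 2 / (4 * τ)) = (2 * τ * u + v) ^ 2 / (4 * τ) := by
    field_simp; ring
  rw [← sub_nonneg, key]
  positivity

set_option maxHeartbeats 2000000 in
/-- Under the regularity assumption (RA) and the cone condition
{d ∈ ℝ^n_+ : dᵀAd ≤ 0, aⱼᵀd = 0 ∀j, dᵢ = 0 for 1 ≤ i ≤ s}, the continuous
reformulation (P_D) of the mixed integer quadratic program (P_M) is convexifiable:
({0} × ℝ) ∩ cl conv 𝒜_{P_D} = ({0} × ℝ) ∩ 𝒜_{P_D}. -/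
theorem stmt_7 (n m s : ℕ) (hs : 1 ≤ s) (hsn : s ≤ n)
    (A : Matrix (Fin n) (Fin n) ℝ) (hA : A.IsSymm) (b : Fin n → ℝ) (c : ℝ)
    (aa : Fin m → Fin n → ℝ) (bb : Fin m → ℝ)
    (f : (Fin n → ℝ) → ℝ) (hf : ∀ x, f x = x ⬝ᵥ A *ᵥ x + b ⬝ᵥ x + c)
    (g : Fin (4 * m + 2 * s) → (Fin n → ℝ) → ℝ)
    (hg : ∀ (j : Fin (4 * m + 2 * s)) (x : Fin n → ℝ),
      g j x =
        if h1 : j.1 < m then aa ⟨j.1, h1⟩ ⬝ᵥ x - bb ⟨j.1, h1⟩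
        else if h2 : j.1 < 2 * m then -(aa ⟨j.1 - m, by omega⟩ ⬝ᵥ x) + bb ⟨j.1 - m, by omega⟩
        else if h3 : j.1 < 3 * m then
          (aa ⟨j.1 - 2 * m, by omega⟩ ⬝ᵥ x) ^ 2 - bb ⟨j.1 - 2 * m, by omega⟩ ^ 2
        else if h4 : j.1 < 4 * m then
          -(aa ⟨j.1 - 3 * m, by omega⟩ ⬝ᵥ x) ^ 2 + bb ⟨j.1 - 3 * m, by omega⟩ ^ 2
        else if h5 : j.1 < 4 * m + s then
          x ⟨j.1 - 4 * m, by omega⟩ * (x ⟨j.1 - 4 * m, by omega⟩ - 1)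
        else
          -(x ⟨j.1 - 4 * m - s, by have := j.isLt; omega⟩ *
            (x ⟨j.1 - 4 * m - s, by have := j.isLt; omega⟩ - 1)))
    (hfeas : ∃ x : Fin n → ℝ, (∀ j, 0 ≤ x j) ∧ (∀ j : Fin m, aa j ⬝ᵥ x = bb j) ∧
      ∀ i : Fin s, x (Fin.castLE hsn i) = 0 ∨ x (Fin.castLE hsn i) = 1)
    (hRA : ∀ d : Fin n → ℝ, (∀ j, 0 ≤ d j) → (∀ j : Fin m, aa j ⬝ᵥ d = bb j) →
      ∀ i : Fin s, 0 ≤ d (Fin.castLE hsn i) ∧ d (Fin.castLE hsn i) ≤ 1)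
    (hcone : {d : Fin n → ℝ | (∀ j, 0 ≤ d j) ∧ d ⬝ᵥ A *ᵥ d ≤ 0 ∧
        (∀ j : Fin m, aa j ⬝ᵥ d = 0) ∧ ∀ i : Fin s, d (Fin.castLE hsn i) = 0} = {0})
    (𝒜 : Set ((Fin (4 * m + 2 * s) → ℝ) × ℝ))
    (h𝒜 : 𝒜 = (fun x : Fin n → ℝ => ((fun j => g j x), f x)) '' {x | ∀ j, 0 ≤ x j}
          + {q : (Fin (4 * m + 2 * s) → ℝ) × ℝ | (∀ j, 0 ≤ q.1 j) ∧ 0 ≤ q.2}) :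
    {p : (Fin (4 * m + 2 * s) → ℝ) × ℝ | p.1 = 0} ∩ closure (convexHull ℝ 𝒜)
      = {p : (Fin (4 * m + 2 * s) → ℝ) × ℝ | p.1 = 0} ∩ 𝒜 := by
  classical
  apply Set.eq_of_subset_of_subset
  swap
  · exact fun p hp => ⟨hp.1, subset_closure (subset_convexHull ℝ 𝒜 hp.2)⟩
  rintro p ⟨hp0, hpcl⟩
  simp only [Set.mem_setOf_eq] at hp0
  refine ⟨hp0, ?_⟩
  obtain ⟨x₀, hx₀pos, hx₀lin, hx₀bin⟩ := hfeas
  -- evaluation lemmas for g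
  have gv1 : ∀ (j : Fin m) (hj : j.1 < 4 * m + 2 * s) (x : Fin n → ℝ),
      g ⟨j.1, hj⟩ x = aa j ⬝ᵥ x - bb j := by
    intro j hj x
    rw [hg, dif_pos (show (⟨j.1, hj⟩ : Fin (4*m+2*s)).1 < m from j.isLt)]
  have gv2 : ∀ (j : Fin m) (hj : m + j.1 < 4 * m + 2 * s) (x : Fin n → ℝ),
      g ⟨m + j.1, hj⟩ x = -(aa j ⬝ᵥ x) + bb j := by
    intro j hj x
    have h2 := j.isLt
    rw [hg, dif_neg (by simp only [Fin.val_mk]; omega), dif_pos (by simp only [Fin.val_mk]; omega)]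
    have hidx : m + j.1 - m = j.1 := by omega
    simp only [hidx]
  have gv3 : ∀ (j : Fin m) (hj : 2 * m + j.1 < 4 * m + 2 * s) (x : Fin n → ℝ),
      g ⟨2 * m + j.1, hj⟩ x = (aa j ⬝ᵥ x) ^ 2 - bb j ^ 2 := by
    intro j hj x
    have h2 := j.isLt
    rw [hg, dif_neg (by simp only [Fin.val_mk]; omega), dif_neg (by simp only [Fin.val_mk]; omega), dif_pos (by simp only [Fin.val_mk]; omega)]
    have hidx : 2 * m + j.1 - 2 * m = j.1 := by omega
    simp only [hidx]
  have gv4 : ∀ (j : Fin m) (hj : 3 * m + j.1 < 4 * m + 2 * s) (x : Fin n → ℝ),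
      g ⟨3 * m + j.1, hj⟩ x = -(aa j ⬝ᵥ x) ^ 2 + bb j ^ 2 := by
    intro j hj x
    have h2 := j.isLt
    rw [hg, dif_neg (by simp only [Fin.val_mk]; omega), dif_neg (by simp only [Fin.val_mk]; omega), dif_neg (by simp only [Fin.val_mk]; omega),
      dif_pos (by simp only [Fin.val_mk]; omega)]
    have hidx : 3 * m + j.1 - 3 * m = j.1 := by omega
    simp only [hidx]
  have gv5 : ∀ (i : Fin s) (hj : 4 * m + i.1 < 4 * m + 2 * s) (x : Fin n → ℝ),
      g ⟨4 * m + i.1, hj⟩ x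
        = x (Fin.castLE hsn i) * (x (Fin.castLE hsn i) - 1) := by
    intro i hj x
    have h2 := i.isLt
    rw [hg, dif_neg (by simp only [Fin.val_mk]; omega), dif_neg (by simp only [Fin.val_mk]; omega), dif_neg (by simp only [Fin.val_mk]; omega),
      dif_neg (by simp only [Fin.val_mk]; omega), dif_pos (by simp only [Fin.val_mk]; omega)]
    have hidx : 4 * m + i.1 - 4 * m = i.1 := by omega
    simp only [hidx]
    rfl
  have gv6 : ∀ (i : Fin s) (hj : 4 * m + s + i.1 < 4 * m + 2 * s) (x : Fin n → ℝ),
      g ⟨4 * m + s + i.1, hj⟩ x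
        = -(x (Fin.castLE hsn i) * (x (Fin.castLE hsn i) - 1)) := by
    intro i hj x
    have h2 := i.isLt
    rw [hg, dif_neg (by simp only [Fin.val_mk]; omega), dif_neg (by simp only [Fin.val_mk]; omega), dif_neg (by simp only [Fin.val_mk]; omega),
      dif_neg (by simp only [Fin.val_mk]; omega), dif_neg (by simp only [Fin.val_mk]; omega)]
    have hidx : 4 * m + s + i.1 - 4 * m - s = i.1 := by omega
    simp only [hidx]
    rfl
  -- g vanishes on P_M-feasible points
  have hgzero : ∀ x : Fin n → ℝ, (∀ j : Fin m, aa j ⬝ᵥ x = bb j) →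
      (∀ i : Fin s, x (Fin.castLE hsn i) = 0 ∨ x (Fin.castLE hsn i) = 1) →
      ∀ jj : Fin (4 * m + 2 * s), g jj x = 0 := by
    intro x hlin hbin jj
    rw [hg]
    split_ifs with h1 h2 h3 h4 h5
    · rw [hlin ⟨jj.1, h1⟩]; ring
    · rw [hlin ⟨jj.1 - m, by omega⟩]; ring
    · rw [hlin ⟨jj.1 - 2 * m, by omega⟩]; ring
    · rw [hlin ⟨jj.1 - 3 * m, by omega⟩]; ring
    · have hb := hbin ⟨jj.1 - 4 * m, by omega⟩
      have : x (Fin.castLE hsn ⟨jj.1 - 4 * m, by omega⟩) = x ⟨jj.1 - 4 * m, by omega⟩ := rfl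
      rw [this] at hb
      rcases hb with h | h <;> rw [h] <;> ring
    · have hb := hbin ⟨jj.1 - 4 * m - s, by have := jj.isLt; omega⟩
      have : x (Fin.castLE hsn ⟨jj.1 - 4 * m - s, by have := jj.isLt; omega⟩)
          = x ⟨jj.1 - 4 * m - s, by have := jj.isLt; omega⟩ := rfl
      rw [this] at hb
      rcases hb with h | h <;> rw [h] <;> ring
  -- RA corollary
  have hRA0 : ∀ u : Fin n → ℝ, (∀ i, 0 ≤ u i) → (∀ j : Fin m, aa j ⬝ᵥ u = 0) →
      ∀ i : Fin s, u (Fin.castLE hsn i) = 0 := by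
    intro u hu hlin i
    by_contra hne
    have hpos : 0 < u (Fin.castLE hsn i) := (hu _).lt_of_ne (Ne.symm hne)
    set t : ℝ := 2 / u (Fin.castLE hsn i) with ht
    have htpos : 0 < t := by positivity
    have h1 : ∀ j, 0 ≤ (x₀ + t • u) j := by
      intro j
      simp only [Pi.add_apply, Pi.smul_apply, smul_eq_mul]
      have := hu j
      have := hx₀pos j
      nlinarith
    have h2 : ∀ j : Fin m, aa j ⬝ᵥ (x₀ + t • u) = bb j := by
      intro j
      rw [dotProduct_add, dotProduct_smul, hlin j, hx₀lin j]
      simp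
    have h3 := (hRA _ h1 h2 i).2
    simp only [Pi.add_apply, Pi.smul_apply, smul_eq_mul] at h3
    rw [ht] at h3
    have h4 : 2 / u (Fin.castLE hsn i) * u (Fin.castLE hsn i) = 2 := by
      field_simp
    rw [h4] at h3
    have := hx₀pos (Fin.castLE hsn i)
    linarith
  -- cone corollary
  have hcone0 : ∀ u : Fin n → ℝ, (∀ i, 0 ≤ u i) → (∀ j : Fin m, aa j ⬝ᵥ u = 0) →
      u ⬝ᵥ A *ᵥ u ≤ 0 → u = 0 := by
    intro u h1 h2 h3
    have hmem : u ∈ {d : Fin n → ℝ | (∀ j, 0 ≤ d j) ∧ d ⬝ᵥ A *ᵥ d ≤ 0 ∧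
        (∀ j : Fin m, aa j ⬝ᵥ d = 0) ∧ ∀ i : Fin s, d (Fin.castLE hsn i) = 0} :=
      ⟨h1, h3, h2, hRA0 u h1 h2⟩
    rw [hcone] at hmem
    exact hmem
  -- coercivity inequality
  have hL2h : ∃ ε : ℝ, 0 < ε ∧ ∃ M : ℝ, 0 ≤ M ∧ ∀ u : Fin n → ℝ, (∀ i, 0 ≤ u i) →
      ε * (u ⬝ᵥ u) ≤ u ⬝ᵥ A *ᵥ u + M * ∑ j : Fin m, (aa j ⬝ᵥ u) ^ 2 := by
    have cont_selfdot : Continuous fun v : Fin n → ℝ => v ⬝ᵥ v := by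
      simp only [dotProduct]
      exact continuous_finset_sum _ fun i _ => (continuous_apply i).mul (continuous_apply i)
    set S : (Fin n → ℝ) → ℝ := fun v => ∑ j : Fin m, (aa j ⬝ᵥ v) ^ 2 with hSdef
    have hScont : Continuous S := continuous_finset_sum _ fun j _ => (cont_dot' (aa j)).pow 2
    have hSnn : ∀ v, 0 ≤ S v := fun v => Finset.sum_nonneg fun j _ => sq_nonneg _
    set K : Set (Fin n → ℝ) := {v | (∀ i, 0 ≤ v i) ∧ v ⬝ᵥ v = 1} with hKdef
    have hKclosed : IsClosed K := by
      have : K = (⋂ i, {v : Fin n → ℝ | 0 ≤ v i}) ∩ {v | v ⬝ᵥ v = 1} := by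
        ext v; simp [hKdef, Set.mem_iInter]
      rw [this]
      exact (isClosed_iInter fun i =>
        isClosed_le continuous_const (continuous_apply i)).inter
        (isClosed_eq cont_selfdot continuous_const)
    have hKbd : K ⊆ Metric.closedBall 0 1 := by
      intro v hv
      rw [mem_closedBall_zero_iff]
      refine (pi_norm_le_iff_of_nonneg zero_le_one).2 fun i => ?_
      rw [Real.norm_eq_abs, ← Real.sqrt_sq_eq_abs, ← Real.sqrt_one]
      exact Real.sqrt_le_sqrt ((sq_le_dot' v i).trans_eq hv.2)
    have hKcomp : IsCompact K :=
      (isCompact_closedBall (0 : Fin n → ℝ) 1).of_isClosed_subset hKclosed hKbd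
    have hMex : ∃ M : ℕ, ∀ v ∈ K, 0 < v ⬝ᵥ A *ᵥ v + (M : ℝ) * S v := by
      by_contra hcon
      push_neg at hcon
      set V : ℕ → Set (Fin n → ℝ) :=
        fun M => {v | v ∈ K ∧ v ⬝ᵥ A *ᵥ v + (M : ℝ) * S v ≤ 0} with hVdef
      have hVsub : ∀ M, V (M + 1) ⊆ V M := by
        intro M v hv
        refine ⟨hv.1, ?_⟩
        have h1 := hSnn v
        have h2 := hv.2
        push_cast at h2 ⊢
        nlinarith
      have hVne : ∀ M, (V M).Nonempty := by
        intro M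
        obtain ⟨v, hvK, hvle⟩ := hcon M
        exact ⟨v, hvK, hvle⟩
      have hVclosed : ∀ M, IsClosed (V M) := by
        intro M
        have : V M = K ∩ {v | v ⬝ᵥ A *ᵥ v + (M : ℝ) * S v ≤ 0} := rfl
        rw [this]
        exact hKclosed.inter (isClosed_le ((cont_quad' A).add
          (continuous_const.mul hScont)) continuous_const)
      have hVcomp : IsCompact (V 0) :=
        hKcomp.of_isClosed_subset (hVclosed 0) fun v hv => hv.1
      obtain ⟨v, hv⟩ := IsCompact.nonempty_iInter_of_sequence_nonempty_isCompact_isClosed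
        V hVsub hVne hVcomp hVclosed
      rw [Set.mem_iInter] at hv
      have hvK : v ∈ K := (hv 0).1
      have hS0 : S v = 0 := by
        by_contra hS
        have hSpos : 0 < S v := (hSnn v).lt_of_ne (Ne.symm hS)
        obtain ⟨M, hMgt⟩ := exists_nat_gt (-(v ⬝ᵥ A *ᵥ v) / S v)
        rw [div_lt_iff₀ hSpos] at hMgt
        have := (hv M).2
        linarith
      have hqA : v ⬝ᵥ A *ᵥ v ≤ 0 := by
        have := (hv 0).2
        rw [hS0] at this
        push_cast at this
        linarith
      have hlin : ∀ j : Fin m, aa j ⬝ᵥ v = 0 := by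
        intro j
        have h := (Finset.sum_eq_zero_iff_of_nonneg
          (fun j _ => sq_nonneg (aa j ⬝ᵥ v))).1 hS0 j (Finset.mem_univ j)
        exact pow_eq_zero_iff (two_ne_zero) |>.1 h
      have hv0 : v = 0 := hcone0 v hvK.1 hlin hqA
      have := hvK.2
      rw [hv0] at this
      simp [zero_dotProduct] at this
    obtain ⟨M, hM⟩ := hMex
    have hKne : K.Nonempty := by
      refine ⟨Pi.single (⟨0, by omega⟩ : Fin n) 1, fun i => ?_, ?_⟩
      · rw [Pi.single_apply]
        split <;> norm_num
      · simp only [dotProduct, Pi.single_apply]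
        rw [Finset.sum_eq_single (⟨0, by omega⟩ : Fin n)]
        · simp
        · intro i _ hne
          simp [hne]
        · intro h
          exact absurd (Finset.mem_univ _) h
    obtain ⟨v₀, hv₀K, hv₀min⟩ := hKcomp.exists_isMinOn hKne
      (((cont_quad' A).add (continuous_const.mul hScont)).continuousOn
        (f := fun v => v ⬝ᵥ A *ᵥ v + (M : ℝ) * S v))
    refine ⟨v₀ ⬝ᵥ A *ᵥ v₀ + (M : ℝ) * S v₀, hM v₀ hv₀K, M, Nat.cast_nonneg M, ?_⟩
    intro u hu
    rcases eq_or_ne u 0 with rfl | hune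
    · have h1 : (0 : Fin n → ℝ) ⬝ᵥ (0 : Fin n → ℝ) = 0 := zero_dotProduct _
      have h2 : (0 : Fin n → ℝ) ⬝ᵥ A *ᵥ (0 : Fin n → ℝ) = 0 := zero_dotProduct _
      have h3 : S 0 = 0 := by simp [hSdef, dotProduct_zero]
      rw [h1, h2]
      simp [dotProduct_zero]
    · have hex : ∃ i, u i ≠ 0 := Function.ne_iff.1 hune
      obtain ⟨i0, hi0⟩ := hex
      have hN2pos : 0 < u ⬝ᵥ u := by
        refine Finset.sum_pos' (fun i _ => mul_self_nonneg _) ⟨i0, Finset.mem_univ i0, ?_⟩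
        exact mul_self_pos.2 hi0
      set t : ℝ := (Real.sqrt (u ⬝ᵥ u))⁻¹ with htdef
      have hsq : Real.sqrt (u ⬝ᵥ u) > 0 := Real.sqrt_pos.2 hN2pos
      have ht2 : t ^ 2 = (u ⬝ᵥ u)⁻¹ := by
        rw [htdef, ← Real.sq_sqrt hN2pos.le]
        field_simp
        rw [Real.sqrt_sq (Real.sqrt_nonneg _)]
      have hvK : t • u ∈ K := by
        constructor
        · intro i
          exact mul_nonneg (inv_nonneg.2 (Real.sqrt_nonneg _)) (hu i)
        · rw [smul_dotProduct, dotProduct_smul, smul_eq_mul, smul_eq_mul,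
            ← mul_assoc, ← pow_two, ht2]
          field_simp
      have hval : (t • u) ⬝ᵥ A *ᵥ (t • u) + (M : ℝ) * S (t • u)
          = (u ⬝ᵥ u)⁻¹ * (u ⬝ᵥ A *ᵥ u + (M : ℝ) * S u) := by
        rw [quad_smul' A t u, ht2]
        have hStu : S (t • u) = t ^ 2 * S u := by
          simp only [hSdef, dotProduct_smul, smul_eq_mul, mul_pow, Finset.mul_sum]
        rw [hStu, ht2]
        ring
      have hmin := hv₀min hvK
      simp only [Set.mem_setOf_eq] at hmin
      rw [hval] at hmin
      calc (v₀ ⬝ᵥ A *ᵥ v₀ + (M : ℝ) * S v₀) * (u ⬝ᵥ u)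
          ≤ (u ⬝ᵥ u)⁻¹ * (u ⬝ᵥ A *ᵥ u + (M : ℝ) * S u) * (u ⬝ᵥ u) :=
            mul_le_mul_of_nonneg_right hmin hN2pos.le
        _ = u ⬝ᵥ A *ᵥ u + (M : ℝ) * S u := by field_simp
  obtain ⟨ε, hε, M, hMnn, hkey⟩ := hL2h
  -- pad point of 𝒜
  have hy₀A : ((fun jj => g jj x₀, f x₀) : (Fin (4 * m + 2 * s) → ℝ) × ℝ) ∈ 𝒜 := by
    rw [h𝒜]
    have hzero : ((fun jj => g jj x₀, f x₀) : (Fin (4 * m + 2 * s) → ℝ) × ℝ)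
        = (fun jj => g jj x₀, f x₀) + (0 : (Fin (4 * m + 2 * s) → ℝ) × ℝ) := by simp
    rw [hzero]
    exact Set.add_mem_add ⟨x₀, hx₀pos, rfl⟩ ⟨fun jj => le_rfl, le_rfl⟩
  obtain ⟨z, hzmem, hzlim⟩ := mem_closure_iff_seq_limit.1 hpcl
  set D := Module.finrank ℝ ((Fin (4 * m + 2 * s) → ℝ) × ℝ) + 1 with hD
  have hDpos : 0 < D := Nat.succ_pos _
  have hrep : ∀ k, ∃ (w : Fin D → ℝ) (y : Fin D → (Fin (4 * m + 2 * s) → ℝ) × ℝ),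
      (∀ d, 0 ≤ w d) ∧ ∑ d, w d = 1 ∧ (∀ d, y d ∈ 𝒜) ∧ ∑ d, w d • y d = z k :=
    fun k => carath_pack' _ hy₀A (hzmem k)
  choose w y hw0 hwsum hyA hysum using hrep
  have hdecomp : ∀ k d, ∃ (xx : Fin n → ℝ) (qq : (Fin (4 * m + 2 * s) → ℝ) × ℝ),
      (∀ i, 0 ≤ xx i) ∧ (∀ jj, 0 ≤ qq.1 jj) ∧ 0 ≤ qq.2 ∧
      y k d = ((fun jj => g jj xx), f xx) + qq := by
    intro k d
    have hm := hyA k d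
    rw [h𝒜] at hm
    obtain ⟨u1, hu1, u2, hu2, hsum⟩ := Set.mem_add.1 hm
    obtain ⟨xx, hxx, rfl⟩ := hu1
    exact ⟨xx, u2, hxx, hu2.1, hu2.2, hsum.symm⟩
  choose x q hxpos hq1 hq2 hyeq using hdecomp
  -- coordinate identities
  have hz1 : ∀ k (jj : Fin (4 * m + 2 * s)), (z k).1 jj
      = ∑ d, w k d * (g jj (x k d) + (q k d).1 jj) := by
    intro k jj
    rw [← hysum k, Prod.fst_sum, Finset.sum_apply]
    refine Finset.sum_congr rfl fun d _ => ?_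
    rw [hyeq k d]
    simp [Prod.smul_fst, Prod.fst_add, mul_add]
  have hz2 : ∀ k, (z k).2 = ∑ d, w k d * (f (x k d) + (q k d).2) := by
    intro k
    rw [← hysum k, Prod.snd_sum]
    refine Finset.sum_congr rfl fun d _ => ?_
    rw [hyeq k d]
    simp [Prod.smul_snd, Prod.snd_add, mul_add]
  -- coordinate limits
  have hcoordlim : ∀ jj : Fin (4 * m + 2 * s), Tendsto (fun k => (z k).1 jj) atTop (𝓝 0) := by
    intro jj
    have h1 : Tendsto (fun k => (z k).1 jj) atTop (𝓝 (p.1 jj)) :=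
      (((continuous_apply jj).comp continuous_fst).tendsto p).comp hzlim
    rw [hp0] at h1
    simpa using h1
  have hrlim : Tendsto (fun k => (z k).2) atTop (𝓝 p.2) :=
    (continuous_snd.tendsto p).comp hzlim
  -- pairing lemma
  have pairlim : ∀ (F Qp Qm : ℕ → ℝ) (jjp jjm : Fin (4 * m + 2 * s)),
      (∀ k, 0 ≤ Qp k) → (∀ k, 0 ≤ Qm k) →
      (∀ k, (z k).1 jjp = F k + Qp k) → (∀ k, (z k).1 jjm = -F k + Qm k) →
      Tendsto F atTop (𝓝 0) := by
    intro F Qp Qm jjp jjm hQp0 hQm0 h1 h2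
    have hsum : ∀ k, Qp k + Qm k = (z k).1 jjp + (z k).1 jjm := by
      intro k; rw [h1 k, h2 k]; ring
    have hQsum : Tendsto (fun k => Qp k + Qm k) atTop (𝓝 0) := by
      have h3 := (hcoordlim jjp).add (hcoordlim jjm)
      rw [add_zero] at h3
      exact h3.congr fun k => (hsum k).symm
    have hQp : Tendsto Qp atTop (𝓝 0) :=
      squeeze_zero hQp0 (fun k => le_add_of_nonneg_right (hQm0 k)) hQsum
    have h4 := (hcoordlim jjp).sub hQp
    rw [sub_zero] at h4
    exact h4.congr fun k => by rw [h1 k]; ring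
  -- limits of the constraint averages
  have hSAlim : ∀ j : Fin m,
      Tendsto (fun k => ∑ d, w k d * (aa j ⬝ᵥ x k d)) atTop (𝓝 (bb j)) := by
    intro j
    have hlt := j.isLt
    have h1 : ∀ k, (z k).1 ⟨j.1, by omega⟩
        = ((∑ d, w k d * (aa j ⬝ᵥ x k d)) - bb j) + ∑ d, w k d * (q k d).1 ⟨j.1, by omega⟩ := by
      intro k
      rw [hz1 k ⟨j.1, by omega⟩]
      have he : ∀ d : Fin D, w k d * (g ⟨j.1, by omega⟩ (x k d) + (q k d).1 ⟨j.1, by omega⟩)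
          = (w k d * (aa j ⬝ᵥ x k d) - w k d * bb j) + w k d * (q k d).1 ⟨j.1, by omega⟩ := by
        intro d
        rw [gv1 j (by omega) (x k d)]
        ring
      rw [Finset.sum_congr rfl fun d _ => he d, Finset.sum_add_distrib,
        Finset.sum_sub_distrib, ← Finset.sum_mul, hwsum k, one_mul]
    have h2 : ∀ k, (z k).1 ⟨m + j.1, by omega⟩
        = -((∑ d, w k d * (aa j ⬝ᵥ x k d)) - bb j)
          + ∑ d, w k d * (q k d).1 ⟨m + j.1, by omega⟩ := by
      intro k
      rw [hz1 k ⟨m + j.1, by omega⟩]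
      have he : ∀ d : Fin D, w k d * (g ⟨m + j.1, by omega⟩ (x k d) + (q k d).1 ⟨m + j.1, by omega⟩)
          = (w k d * bb j - w k d * (aa j ⬝ᵥ x k d)) + w k d * (q k d).1 ⟨m + j.1, by omega⟩ := by
        intro d
        rw [gv2 j (by omega) (x k d)]
        ring
      rw [Finset.sum_congr rfl fun d _ => he d, Finset.sum_add_distrib,
        Finset.sum_sub_distrib, ← Finset.sum_mul, hwsum k, one_mul]
      ring
    have h3 := pairlim _ _ _ _ _
      (fun k => Finset.sum_nonneg fun d _ => mul_nonneg (hw0 k d) (hq1 k d _))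
      (fun k => Finset.sum_nonneg fun d _ => mul_nonneg (hw0 k d) (hq1 k d _)) h1 h2
    have h4 := h3.add (tendsto_const_nhds (x := bb j))
    rw [zero_add] at h4
    exact h4.congr fun k => by ring
  have hSQlim : ∀ j : Fin m,
      Tendsto (fun k => ∑ d, w k d * (aa j ⬝ᵥ x k d) ^ 2) atTop (𝓝 (bb j ^ 2)) := by
    intro j
    have hlt := j.isLt
    have h1 : ∀ k, (z k).1 ⟨2 * m + j.1, by omega⟩
        = ((∑ d, w k d * (aa j ⬝ᵥ x k d) ^ 2) - bb j ^ 2)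
          + ∑ d, w k d * (q k d).1 ⟨2 * m + j.1, by omega⟩ := by
      intro k
      rw [hz1 k ⟨2 * m + j.1, by omega⟩]
      have he : ∀ d : Fin D, w k d * (g ⟨2 * m + j.1, by omega⟩ (x k d)
            + (q k d).1 ⟨2 * m + j.1, by omega⟩)
          = (w k d * (aa j ⬝ᵥ x k d) ^ 2 - w k d * bb j ^ 2)
            + w k d * (q k d).1 ⟨2 * m + j.1, by omega⟩ := by
        intro d
        rw [gv3 j (by omega) (x k d)]
        ring
      rw [Finset.sum_congr rfl fun d _ => he d, Finset.sum_add_distrib,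
        Finset.sum_sub_distrib, ← Finset.sum_mul, hwsum k, one_mul]
    have h2 : ∀ k, (z k).1 ⟨3 * m + j.1, by omega⟩
        = -((∑ d, w k d * (aa j ⬝ᵥ x k d) ^ 2) - bb j ^ 2)
          + ∑ d, w k d * (q k d).1 ⟨3 * m + j.1, by omega⟩ := by
      intro k
      rw [hz1 k ⟨3 * m + j.1, by omega⟩]
      have he : ∀ d : Fin D, w k d * (g ⟨3 * m + j.1, by omega⟩ (x k d)
            + (q k d).1 ⟨3 * m + j.1, by omega⟩)
          = (w k d * bb j ^ 2 - w k d * (aa j ⬝ᵥ x k d) ^ 2)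
            + w k d * (q k d).1 ⟨3 * m + j.1, by omega⟩ := by
        intro d
        rw [gv4 j (by omega) (x k d)]
        ring
      rw [Finset.sum_congr rfl fun d _ => he d, Finset.sum_add_distrib,
        Finset.sum_sub_distrib, ← Finset.sum_mul, hwsum k, one_mul]
      ring
    have h3 := pairlim _ _ _ _ _
      (fun k => Finset.sum_nonneg fun d _ => mul_nonneg (hw0 k d) (hq1 k d _))
      (fun k => Finset.sum_nonneg fun d _ => mul_nonneg (hw0 k d) (hq1 k d _)) h1 h2
    have h4 := h3.add (tendsto_const_nhds (x := bb j ^ 2))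
    rw [zero_add] at h4
    exact h4.congr fun k => by ring
  have hSBlim : ∀ i : Fin s,
      Tendsto (fun k => ∑ d, w k d * (x k d (Fin.castLE hsn i)
        * (x k d (Fin.castLE hsn i) - 1))) atTop (𝓝 0) := by
    intro i
    have hlt := i.isLt
    have h1 : ∀ k, (z k).1 ⟨4 * m + i.1, by omega⟩
        = (∑ d, w k d * (x k d (Fin.castLE hsn i) * (x k d (Fin.castLE hsn i) - 1)))
          + ∑ d, w k d * (q k d).1 ⟨4 * m + i.1, by omega⟩ := by
      intro k
      rw [hz1 k ⟨4 * m + i.1, by omega⟩]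
      have he : ∀ d : Fin D, w k d * (g ⟨4 * m + i.1, by omega⟩ (x k d)
            + (q k d).1 ⟨4 * m + i.1, by omega⟩)
          = w k d * (x k d (Fin.castLE hsn i) * (x k d (Fin.castLE hsn i) - 1))
            + w k d * (q k d).1 ⟨4 * m + i.1, by omega⟩ := by
        intro d
        rw [gv5 i (by omega) (x k d)]
        ring
      rw [Finset.sum_congr rfl fun d _ => he d, Finset.sum_add_distrib]
    have h2 : ∀ k, (z k).1 ⟨4 * m + s + i.1, by omega⟩
        = -(∑ d, w k d * (x k d (Fin.castLE hsn i) * (x k d (Fin.castLE hsn i) - 1)))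
          + ∑ d, w k d * (q k d).1 ⟨4 * m + s + i.1, by omega⟩ := by
      intro k
      rw [hz1 k ⟨4 * m + s + i.1, by omega⟩]
      have he : ∀ d : Fin D, w k d * (g ⟨4 * m + s + i.1, by omega⟩ (x k d)
            + (q k d).1 ⟨4 * m + s + i.1, by omega⟩)
          = -(w k d * (x k d (Fin.castLE hsn i) * (x k d (Fin.castLE hsn i) - 1)))
            + w k d * (q k d).1 ⟨4 * m + s + i.1, by omega⟩ := by
        intro d
        rw [gv6 i (by omega) (x k d)]
        ring
      rw [Finset.sum_congr rfl fun d _ => he d, Finset.sum_add_distrib, Finset.sum_neg_distrib]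
    exact pairlim _ _ _ _ _
      (fun k => Finset.sum_nonneg fun d _ => mul_nonneg (hw0 k d) (hq1 k d _))
      (fun k => Finset.sum_nonneg fun d _ => mul_nonneg (hw0 k d) (hq1 k d _)) h1 h2
  have hSFle : ∀ k, (∑ d, w k d * f (x k d)) ≤ (z k).2 := by
    intro k
    rw [hz2 k]
    have he : ∀ d : Fin D, w k d * (f (x k d) + (q k d).2)
        = w k d * f (x k d) + w k d * (q k d).2 := fun d => by ring
    rw [Finset.sum_congr rfl fun d _ => he d, Finset.sum_add_distrib]
    exact le_add_of_nonneg_right (Finset.sum_nonneg fun d _ =>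
      mul_nonneg (hw0 k d) (hq2 k d))
  -- rescaled points
  obtain ⟨u, hu⟩ : ∃ u : ℕ → Fin D → Fin n → ℝ,
      ∀ k d, u k d = Real.sqrt (w k d) • x k d := ⟨_, fun k d => rfl⟩
  have hsqw : ∀ k d, Real.sqrt (w k d) * Real.sqrt (w k d) = w k d :=
    fun k d => Real.mul_self_sqrt (hw0 k d)
  have hdotu : ∀ k d (v : Fin n → ℝ), v ⬝ᵥ u k d = Real.sqrt (w k d) * (v ⬝ᵥ x k d) := by
    intro k d v
    rw [hu k d, dotProduct_smul, smul_eq_mul]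
  have huu : ∀ k d, u k d ⬝ᵥ u k d = w k d * (x k d ⬝ᵥ x k d) := by
    intro k d
    rw [hu k d, smul_dotProduct, dotProduct_smul, smul_eq_mul, smul_eq_mul,
      ← mul_assoc, hsqw k d]
  have hquadu : ∀ k d, u k d ⬝ᵥ A *ᵥ u k d = w k d * (x k d ⬝ᵥ A *ᵥ x k d) := by
    intro k d
    rw [hu k d, quad_smul', Real.sq_sqrt (hw0 k d)]
  have hunn : ∀ k d i, 0 ≤ u k d i := by
    intro k d i
    rw [hu k d]
    exact mul_nonneg (Real.sqrt_nonneg _) (hxpos k d i)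
  -- the T sequence
  obtain ⟨T, hT⟩ : ∃ T : ℕ → ℝ, ∀ k, T k
      = ∑ d, ∑ j, (aa j ⬝ᵥ u k d - Real.sqrt (w k d) * bb j) ^ 2 := ⟨_, fun k => rfl⟩
  have hTnn : ∀ k, 0 ≤ T k := fun k => (hT k) ▸
    Finset.sum_nonneg fun d _ => Finset.sum_nonneg fun j _ => sq_nonneg _
  have hTalt : ∀ k, T k = ∑ j, ((∑ d, w k d * (aa j ⬝ᵥ x k d) ^ 2)
      - 2 * bb j * (∑ d, w k d * (aa j ⬝ᵥ x k d)) + bb j ^ 2) := by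
    intro k
    rw [hT k, Finset.sum_comm]
    refine Finset.sum_congr rfl fun j _ => ?_
    have he : ∀ d : Fin D, (aa j ⬝ᵥ u k d - Real.sqrt (w k d) * bb j) ^ 2
        = w k d * (aa j ⬝ᵥ x k d) ^ 2 - 2 * bb j * (w k d * (aa j ⬝ᵥ x k d))
          + w k d * bb j ^ 2 := by
      intro d
      rw [hdotu k d (aa j)]
      generalize hr : Real.sqrt (w k d) = r
      have hr2 : r * r = w k d := by rw [← hr]; exact hsqw k d
      rw [← hr2]
      ring
    rw [Finset.sum_congr rfl fun d _ => he d, Finset.sum_add_distrib,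
      Finset.sum_sub_distrib, ← Finset.mul_sum, ← Finset.sum_mul, hwsum k, one_mul]
  have hTlim : Tendsto T atTop (𝓝 0) := by
    have h1 : Tendsto (fun k => ∑ j, ((∑ d, w k d * (aa j ⬝ᵥ x k d) ^ 2)
        - 2 * bb j * (∑ d, w k d * (aa j ⬝ᵥ x k d)) + bb j ^ 2)) atTop
        (𝓝 (∑ j, (bb j ^ 2 - 2 * bb j * bb j + bb j ^ 2))) := by
      refine tendsto_finset_sum _ fun j _ => ?_
      exact ((hSQlim j).sub ((hSAlim j).const_mul (2 * bb j))).add tendsto_const_nhds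
    have h2 : (∑ j, (bb j ^ 2 - 2 * bb j * bb j + bb j ^ 2)) = 0 :=
      Finset.sum_eq_zero fun j _ => by ring
    rw [h2] at h1
    exact h1.congr fun k => (hTalt k).symm
  -- lower bound on f
  have hband : ∀ v : Fin n → ℝ,
      -((ε/2) * (v ⬝ᵥ v)) - (b ⬝ᵥ b) / (4 * (ε/2)) ≤ b ⬝ᵥ v := by
    intro v
    have hτ : (0:ℝ) < ε/2 := by positivity
    calc -((ε/2) * (v ⬝ᵥ v)) - (b ⬝ᵥ b) / (4 * (ε/2))
        = ∑ i, (-((ε/2) * (v i * v i)) - (b i * b i) / (4 * (ε/2))) := by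
          simp only [dotProduct]
          rw [Finset.mul_sum, Finset.sum_div, ← Finset.sum_neg_distrib,
            ← Finset.sum_sub_distrib]
      _ ≤ ∑ i, v i * b i := by
          refine Finset.sum_le_sum fun i _ => ?_
          have := amgm' (ε/2) (v i) (b i) hτ
          rw [pow_two, pow_two] at this
          exact this
      _ = b ⬝ᵥ v := Finset.sum_congr rfl fun i _ => mul_comm _ _
  have hquadlb : ∀ v : Fin n → ℝ, (∀ i, 0 ≤ v i) → ε * (v ⬝ᵥ v)
      ≤ v ⬝ᵥ A *ᵥ v + 2 * M * (∑ j, (aa j ⬝ᵥ v - bb j) ^ 2)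
        + 2 * M * (∑ j, bb j ^ 2) := by
    intro v hv
    have h1 := hkey v hv
    have h2 : (∑ j, (aa j ⬝ᵥ v) ^ 2)
        ≤ 2 * (∑ j, (aa j ⬝ᵥ v - bb j) ^ 2) + 2 * (∑ j, bb j ^ 2) := by
      rw [Finset.mul_sum, Finset.mul_sum, ← Finset.sum_add_distrib]
      exact Finset.sum_le_sum fun j _ => by nlinarith [sq_nonneg (aa j ⬝ᵥ v - 2 * bb j)]
    nlinarith [mul_le_mul_of_nonneg_left h2 hMnn]
  obtain ⟨C₀, hC₀⟩ : ∃ C₀ : ℝ, C₀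
      = 2 * M * (∑ j, bb j ^ 2) + (b ⬝ᵥ b) / (4 * (ε/2)) - c := ⟨_, rfl⟩
  have hflb : ∀ v : Fin n → ℝ, (∀ i, 0 ≤ v i) → (ε/2) * (v ⬝ᵥ v)
      ≤ f v + 2 * M * (∑ j, (aa j ⬝ᵥ v - bb j) ^ 2) + C₀ := by
    intro v hv
    have h1 := hquadlb v hv
    have h2 := hband v
    rw [hf v, hC₀]
    linarith
  -- second moment bound
  have hmomk : ∀ k, (ε/2) * (∑ d, u k d ⬝ᵥ u k d)
      ≤ (∑ d, w k d * f (x k d)) + 2 * M * T k + C₀ := by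
    intro k
    have hd : ∀ d : Fin D, (ε/2) * (u k d ⬝ᵥ u k d) ≤ w k d * f (x k d)
        + 2 * M * (∑ j, (aa j ⬝ᵥ u k d - Real.sqrt (w k d) * bb j) ^ 2)
        + w k d * C₀ := by
      intro d
      have h1 := mul_le_mul_of_nonneg_left (hflb (x k d) (hxpos k d)) (hw0 k d)
      have e2 : (∑ j, (aa j ⬝ᵥ u k d - Real.sqrt (w k d) * bb j) ^ 2)
          = w k d * ∑ j, (aa j ⬝ᵥ x k d - bb j) ^ 2 := by
        rw [Finset.mul_sum]
        refine Finset.sum_congr rfl fun j _ => ?_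
        rw [hdotu k d (aa j)]
        generalize hr : Real.sqrt (w k d) = r
        have hr2 : r * r = w k d := by rw [← hr]; exact hsqw k d
        rw [← hr2]
        ring
      rw [huu k d, e2]
      nlinarith [h1]
    calc (ε/2) * (∑ d, u k d ⬝ᵥ u k d) = ∑ d, (ε/2) * (u k d ⬝ᵥ u k d) := Finset.mul_sum _ _ _
      _ ≤ ∑ d, (w k d * f (x k d)
          + 2 * M * (∑ j, (aa j ⬝ᵥ u k d - Real.sqrt (w k d) * bb j) ^ 2)
          + w k d * C₀) := Finset.sum_le_sum fun d _ => hd d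
      _ = (∑ d, w k d * f (x k d)) + 2 * M * T k + C₀ := by
          rw [Finset.sum_add_distrib, Finset.sum_add_distrib, ← Finset.mul_sum, ← hT k,
            ← Finset.sum_mul, hwsum k, one_mul]
  -- eventual bounds and second-moment bound
  obtain ⟨K₀, hK₀⟩ : ∃ K₀, ∀ k ≥ K₀, T k ≤ 1 ∧ (z k).2 ≤ p.2 + 1 := by
    have h1 : ∀ᶠ k in atTop, T k ≤ 1 :=
      hTlim.eventually_le_const (by norm_num : (0:ℝ) < 1)
    have h2 : ∀ᶠ k in atTop, (z k).2 ≤ p.2 + 1 :=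
      hrlim.eventually_le_const (by linarith : p.2 < p.2 + 1)
    exact eventually_atTop.1 (h1.and h2)
  obtain ⟨R2, hR2def⟩ : ∃ R2 : ℝ, R2 = (2/ε) * ((p.2 + 1) + 2 * M + C₀) := ⟨_, rfl⟩
  have hmombd : ∀ k ≥ K₀, ∀ d, u k d ⬝ᵥ u k d ≤ R2 := by
    intro k hk d
    have h1 := hmomk k
    have h2 := (hK₀ k hk).1
    have h3 := (hK₀ k hk).2
    have h4 := hSFle k
    have h5 : (ε/2) * (∑ d, u k d ⬝ᵥ u k d) ≤ (p.2 + 1) + 2 * M + C₀ := by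
      have hMT : 2 * M * T k ≤ 2 * M := by nlinarith
      linarith
    have h6 : u k d ⬝ᵥ u k d ≤ ∑ d, u k d ⬝ᵥ u k d :=
      Finset.single_le_sum (f := fun d => u k d ⬝ᵥ u k d)
        (fun d _ => dot_nonneg' _) (Finset.mem_univ d)
    have h7 : (∑ d, u k d ⬝ᵥ u k d) ≤ (2/ε) * ((p.2 + 1) + 2 * M + C₀) := by
      rw [div_mul_eq_mul_div, le_div_iff₀ hε]
      linarith
    rw [hR2def]
    linarith
  have hR2nn : 0 ≤ R2 :=
    (dot_nonneg' (u K₀ ⟨0, hDpos⟩)).trans (hmombd K₀ le_rfl ⟨0, hDpos⟩)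
  obtain ⟨Rb, hRbdef⟩ : ∃ Rb : ℝ, Rb = Real.sqrt R2 := ⟨_, rfl⟩
  -- compactness extraction
  have hSccomp : IsCompact ((Set.univ.pi fun _ : Fin D => Set.Icc (0:ℝ) 1) ×ˢ
      (Set.univ.pi fun _ : Fin D => Set.univ.pi fun _ : Fin n => Set.Icc (-Rb) Rb)) :=
    (isCompact_univ_pi fun _ => isCompact_Icc).prod
      (isCompact_univ_pi fun _ => isCompact_univ_pi fun _ => isCompact_Icc)
  have hmemSc : ∀ k, ((w (K₀ + k), u (K₀ + k)) :
      (Fin D → ℝ) × (Fin D → Fin n → ℝ)) ∈ (Set.univ.pi fun _ : Fin D => Set.Icc (0:ℝ) 1) ×ˢ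
      (Set.univ.pi fun _ : Fin D => Set.univ.pi fun _ : Fin n => Set.Icc (-Rb) Rb) := by
    intro k
    constructor
    · intro d _
      refine ⟨hw0 _ d, ?_⟩
      rw [← hwsum (K₀ + k)]
      exact Finset.single_le_sum (f := fun d => w (K₀ + k) d)
        (fun d _ => hw0 _ d) (Finset.mem_univ d)
    · intro d _
      intro i _
      have h1 : (u (K₀ + k) d i) ^ 2 ≤ R2 :=
        (sq_le_dot' (u (K₀ + k) d) i).trans (hmombd (K₀ + k) (Nat.le_add_right _ _) d)
      have h2 : |u (K₀ + k) d i| ≤ Rb := by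
        rw [hRbdef, ← Real.sqrt_sq_eq_abs]
        exact Real.sqrt_le_sqrt h1
      exact abs_le.1 h2
  obtain ⟨wub, hwubmem, φ, hφmono, hφlim⟩ := hSccomp.tendsto_subseq hmemSc
  obtain ⟨wb, ub⟩ := wub
  obtain ⟨ψ, hψdef⟩ : ∃ ψ : ℕ → ℕ, ψ = fun k => K₀ + φ k := ⟨_, rfl⟩
  have hψtop : Tendsto ψ atTop atTop := by
    rw [hψdef]
    exact tendsto_atTop_mono (fun k => Nat.le_add_left (φ k) K₀) hφmono.tendsto_atTop
  have hwulim : Tendsto (fun k => ((w (ψ k), u (ψ k)) :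
      (Fin D → ℝ) × (Fin D → Fin n → ℝ))) atTop (𝓝 (wb, ub)) := by
    rw [hψdef]
    exact hφlim
  have hwblim : ∀ d, Tendsto (fun k => w (ψ k) d) atTop (𝓝 (wb d)) := fun d =>
    (((continuous_apply d).comp continuous_fst).tendsto _).comp hwulim
  have hublim : ∀ d, Tendsto (fun k => u (ψ k) d) atTop (𝓝 (ub d)) := fun d =>
    (((continuous_apply d).comp continuous_snd).tendsto _).comp hwulim
  have hubclim : ∀ d i, Tendsto (fun k => u (ψ k) d i) atTop (𝓝 (ub d i)) := fun d i =>
    ((continuous_apply i).tendsto _).comp (hublim d)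
  have hwbnn : ∀ d, 0 ≤ wb d := fun d =>
    ge_of_tendsto' (hwblim d) fun k => hw0 (ψ k) d
  have hubnn : ∀ d i, 0 ≤ ub d i := fun d i =>
    ge_of_tendsto' (hubclim d i) fun k => hunn (ψ k) d i
  -- limit identities
  have hwbsum : ∑ d, wb d = 1 := by
    have h1 : Tendsto (fun k => ∑ d, w (ψ k) d) atTop (𝓝 (∑ d, wb d)) :=
      tendsto_finset_sum _ fun d _ => hwblim d
    have h2 : Tendsto (fun k => ∑ d, w (ψ k) d) atTop (𝓝 1) := by
      have : (fun k => ∑ d, w (ψ k) d) = fun _ => 1 := funext fun k => hwsum (ψ k)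
      rw [this]
      exact tendsto_const_nhds
    exact tendsto_nhds_unique h1 h2
  have hsqlim : ∀ d, Tendsto (fun k => Real.sqrt (w (ψ k) d)) atTop
      (𝓝 (Real.sqrt (wb d))) := fun d =>
    (Real.continuous_sqrt.tendsto _).comp (hwblim d)
  have hdotlim : ∀ d (v : Fin n → ℝ), Tendsto (fun k => v ⬝ᵥ u (ψ k) d) atTop
      (𝓝 (v ⬝ᵥ ub d)) := fun d v => ((cont_dot' v).tendsto _).comp (hublim d)
  have hE1 : ∀ d j, aa j ⬝ᵥ ub d = Real.sqrt (wb d) * bb j := by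
    have h1 : Tendsto (fun k => T (ψ k)) atTop
        (𝓝 (∑ d, ∑ j, (aa j ⬝ᵥ ub d - Real.sqrt (wb d) * bb j) ^ 2)) := by
      have := (funext fun k => hT (ψ k) :
        (fun k => T (ψ k)) = fun k => ∑ d, ∑ j,
          (aa j ⬝ᵥ u (ψ k) d - Real.sqrt (w (ψ k) d) * bb j) ^ 2)
      rw [this]
      refine tendsto_finset_sum _ fun d _ => tendsto_finset_sum _ fun j _ => ?_
      exact (((hdotlim d (aa j)).sub ((hsqlim d).mul_const (bb j))).pow 2)
    have h2 : Tendsto (fun k => T (ψ k)) atTop (𝓝 0) := hTlim.comp hψtop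
    have h3 : (∑ d, ∑ j, (aa j ⬝ᵥ ub d - Real.sqrt (wb d) * bb j) ^ 2) = 0 :=
      tendsto_nhds_unique h1 h2
    intro d j
    have h4 := (Finset.sum_eq_zero_iff_of_nonneg fun d _ =>
      Finset.sum_nonneg fun j _ => sq_nonneg _).1 h3 d (Finset.mem_univ d)
    have h5 := (Finset.sum_eq_zero_iff_of_nonneg fun j _ => sq_nonneg _).1 h4 j
      (Finset.mem_univ j)
    have h6 := pow_eq_zero_iff (two_ne_zero) |>.1 h5
    linarith [h6]
  -- limit of binary constraints
  have hSBbar : ∀ i : Fin s, (∑ d, ((ub d (Fin.castLE hsn i)) ^ 2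
      - Real.sqrt (wb d) * ub d (Fin.castLE hsn i))) = 0 := by
    intro i
    have hid : ∀ k, (∑ d, w k d * (x k d (Fin.castLE hsn i)
        * (x k d (Fin.castLE hsn i) - 1)))
        = ∑ d, ((u k d (Fin.castLE hsn i)) ^ 2
          - Real.sqrt (w k d) * u k d (Fin.castLE hsn i)) := by
      intro k
      refine Finset.sum_congr rfl fun d _ => ?_
      have hux : u k d (Fin.castLE hsn i) = Real.sqrt (w k d) * x k d (Fin.castLE hsn i) := by
        rw [hu k d]
        simp [smul_eq_mul]
      rw [hux]
      generalize hr : Real.sqrt (w k d) = r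
      have hr2 : r * r = w k d := by rw [← hr]; exact hsqw k d
      rw [← hr2]
      ring
    have h1 : Tendsto (fun k => ∑ d, ((u (ψ k) d (Fin.castLE hsn i)) ^ 2
        - Real.sqrt (w (ψ k) d) * u (ψ k) d (Fin.castLE hsn i))) atTop
        (𝓝 (∑ d, ((ub d (Fin.castLE hsn i)) ^ 2
          - Real.sqrt (wb d) * ub d (Fin.castLE hsn i)))) := by
      refine tendsto_finset_sum _ fun d _ => ?_
      exact ((hubclim d _).pow 2).sub ((hsqlim d).mul (hubclim d _))
    have h2 : Tendsto (fun k => ∑ d, ((u (ψ k) d (Fin.castLE hsn i)) ^ 2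
        - Real.sqrt (w (ψ k) d) * u (ψ k) d (Fin.castLE hsn i))) atTop (𝓝 0) := by
      have h3 := (hSBlim i).comp hψtop
      exact h3.congr fun k => hid (ψ k)
    exact tendsto_nhds_unique h1 h2
  have hsqw' : ∀ d, Real.sqrt (wb d) * Real.sqrt (wb d) = wb d :=
    fun d => Real.mul_self_sqrt (hwbnn d)
  -- limit of objective
  have hFbar : (∑ d, (ub d ⬝ᵥ A *ᵥ ub d + Real.sqrt (wb d) * (b ⬝ᵥ ub d) + wb d * c))
      ≤ p.2 := by
    have hid : ∀ k, (∑ d, (u k d ⬝ᵥ A *ᵥ u k d + Real.sqrt (w k d) * (b ⬝ᵥ u k d)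
        + w k d * c)) = ∑ d, w k d * f (x k d) := by
      intro k
      refine Finset.sum_congr rfl fun d _ => ?_
      rw [hquadu k d, hdotu k d b, hf (x k d), ← mul_assoc, hsqw k d]
      ring
    have h1 : Tendsto (fun k => ∑ d, (u (ψ k) d ⬝ᵥ A *ᵥ u (ψ k) d
        + Real.sqrt (w (ψ k) d) * (b ⬝ᵥ u (ψ k) d) + w (ψ k) d * c)) atTop
        (𝓝 (∑ d, (ub d ⬝ᵥ A *ᵥ ub d + Real.sqrt (wb d) * (b ⬝ᵥ ub d) + wb d * c))) := by
      refine tendsto_finset_sum _ fun d _ => ?_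
      exact ((((cont_quad' A).tendsto _).comp (hublim d)).add
        ((hsqlim d).mul (hdotlim d b))).add ((hwblim d).mul_const c)
    have h2 : Tendsto (fun k => (z (ψ k)).2) atTop (𝓝 p.2) := hrlim.comp hψtop
    refine le_of_tendsto_of_tendsto' h1 h2 fun k => ?_
    rw [hid (ψ k)]
    exact hSFle (ψ k)
  -- the limit points
  obtain ⟨xb, hxbdef⟩ : ∃ xb : Fin D → Fin n → ℝ,
      ∀ d, xb d = (Real.sqrt (wb d))⁻¹ • ub d := ⟨_, fun d => rfl⟩
  have hxbnn : ∀ d i, 0 ≤ xb d i := by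
    intro d i
    rw [hxbdef d]
    exact mul_nonneg (inv_nonneg.2 (Real.sqrt_nonneg _)) (hubnn d i)
  have hubeq : ∀ d, wb d ≠ 0 → ub d = Real.sqrt (wb d) • xb d := by
    intro d hd
    have hwpos : 0 < wb d := (hwbnn d).lt_of_ne (Ne.symm hd)
    have hrpos : (0:ℝ) < Real.sqrt (wb d) := Real.sqrt_pos.2 hwpos
    rw [hxbdef d, smul_smul, mul_inv_cancel₀ (ne_of_gt hrpos), one_smul]
  have hxblin : ∀ d, wb d ≠ 0 → ∀ j : Fin m, aa j ⬝ᵥ xb d = bb j := by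
    intro d hd j
    have hwpos : 0 < wb d := (hwbnn d).lt_of_ne (Ne.symm hd)
    have hrpos : (0:ℝ) < Real.sqrt (wb d) := Real.sqrt_pos.2 hwpos
    rw [hxbdef d, dotProduct_smul, smul_eq_mul, hE1 d j]
    field_simp
  have hlinzero : ∀ d, wb d = 0 → ∀ j : Fin m, aa j ⬝ᵥ ub d = 0 := by
    intro d hd j
    rw [hE1 d j, hd, Real.sqrt_zero, zero_mul]
  -- binary coordinates of limit points
  have hterm : ∀ (i : Fin s) (d : Fin D), (ub d (Fin.castLE hsn i)) ^ 2
      - Real.sqrt (wb d) * ub d (Fin.castLE hsn i) ≤ 0 := by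
    intro i d
    by_cases hd : wb d = 0
    · have hz0 : ub d (Fin.castLE hsn i) = 0 :=
        hRA0 (ub d) (hubnn d) (hlinzero d hd) i
      rw [hz0]
      simp
    · have hra := hRA (xb d) (hxbnn d) (hxblin d hd) i
      have h1 : ub d (Fin.castLE hsn i) = Real.sqrt (wb d) * xb d (Fin.castLE hsn i) := by
        rw [hubeq d hd]
        simp [smul_eq_mul]
      rw [h1]
      generalize hr : Real.sqrt (wb d) = r
      have hr2 : r * r = wb d := by rw [← hr]; exact hsqw' d
      have hrnn : 0 ≤ r := by rw [← hr]; exact Real.sqrt_nonneg _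
      have hkey2 := mul_nonneg (mul_self_nonneg r)
        (mul_nonneg hra.1 (sub_nonneg.2 hra.2))
      nlinarith [hkey2]
  have htermzero : ∀ (i : Fin s) (d : Fin D), (ub d (Fin.castLE hsn i)) ^ 2
      - Real.sqrt (wb d) * ub d (Fin.castLE hsn i) = 0 := by
    intro i d
    have h1 : ∀ d' ∈ Finset.univ, -((ub d' (Fin.castLE hsn i)) ^ 2
        - Real.sqrt (wb d') * ub d' (Fin.castLE hsn i)) ≥ 0 :=
      fun d' _ => neg_nonneg.2 (hterm i d')
    have h2 : (∑ d', -((ub d' (Fin.castLE hsn i)) ^ 2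
        - Real.sqrt (wb d') * ub d' (Fin.castLE hsn i))) = 0 := by
      rw [Finset.sum_neg_distrib, hSBbar i, neg_zero]
    have h3 := (Finset.sum_eq_zero_iff_of_nonneg h1).1 h2 d (Finset.mem_univ d)
    linarith [h3]
  have hbinary : ∀ d, wb d ≠ 0 →
      ∀ i : Fin s, xb d (Fin.castLE hsn i) = 0 ∨ xb d (Fin.castLE hsn i) = 1 := by
    intro d hd i
    have h1 := htermzero i d
    have h2 : ub d (Fin.castLE hsn i) = Real.sqrt (wb d) * xb d (Fin.castLE hsn i) := by
      rw [hubeq d hd]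
      simp [smul_eq_mul]
    rw [h2] at h1
    have hr2 : Real.sqrt (wb d) * Real.sqrt (wb d) = wb d := hsqw' d
    have h3 : wb d * (xb d (Fin.castLE hsn i) * (xb d (Fin.castLE hsn i) - 1)) = 0 := by
      rw [← hr2]
      nlinarith [h1]
    rcases mul_eq_zero.1 h3 with h4 | h4
    · exact absurd h4 hd
    · rcases mul_eq_zero.1 h4 with h5 | h5
      · exact Or.inl h5
      · exact Or.inr (by linarith)
  -- objective terms
  have hvalpos : ∀ d, wb d ≠ 0 → ub d ⬝ᵥ A *ᵥ ub d + Real.sqrt (wb d) * (b ⬝ᵥ ub d)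
      + wb d * c = wb d * f (xb d) := by
    intro d hd
    rw [hubeq d hd, quad_smul', Real.sq_sqrt (hwbnn d), dotProduct_smul,
      smul_eq_mul, ← mul_assoc, hsqw' d, hf (xb d)]
    ring
  have hvalzero : ∀ d, wb d = 0 → 0 ≤ ub d ⬝ᵥ A *ᵥ ub d + Real.sqrt (wb d) * (b ⬝ᵥ ub d)
      + wb d * c := by
    intro d hd
    rw [hd, Real.sqrt_zero, zero_mul, zero_mul, add_zero, add_zero]
    by_contra hneg
    push_neg at hneg
    have h0 : ub d = 0 := hcone0 (ub d) (hubnn d) (hlinzero d hd) hneg.le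
    rw [h0, zero_dotProduct] at hneg
    exact absurd hneg (lt_irrefl 0)
  have hexists : ∃ d, wb d ≠ 0 ∧ f (xb d) ≤ p.2 := by
    by_contra hcon
    push_neg at hcon
    have hne : ∃ d0 : Fin D, wb d0 ≠ 0 := by
      by_contra hall
      push_neg at hall
      have hzero : (∑ d, wb d) = 0 := Finset.sum_eq_zero fun d _ => hall d
      rw [hwbsum] at hzero
      norm_num at hzero
    obtain ⟨d0, hd0⟩ := hne
    have hlt : (∑ d, wb d * p.2) < ∑ d, (ub d ⬝ᵥ A *ᵥ ub d
        + Real.sqrt (wb d) * (b ⬝ᵥ ub d) + wb d * c) := by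
      refine Finset.sum_lt_sum (fun d _ => ?_) ⟨d0, Finset.mem_univ d0, ?_⟩
      · by_cases hd : wb d = 0
        · calc wb d * p.2 = 0 := by rw [hd, zero_mul]
            _ ≤ _ := hvalzero d hd
        · rw [hvalpos d hd]
          have hwpos : 0 < wb d := (hwbnn d).lt_of_ne (Ne.symm hd)
          exact mul_le_mul_of_nonneg_left (hcon d hd).le hwpos.le
      · rw [hvalpos d0 hd0]
        have hwpos : 0 < wb d0 := (hwbnn d0).lt_of_ne (Ne.symm hd0)
        exact mul_lt_mul_of_pos_left (hcon d0 hd0) hwpos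
    rw [← Finset.sum_mul, hwbsum, one_mul] at hlt
    linarith [hFbar]
  obtain ⟨d0, hd0, hfle⟩ := hexists
  have hgz : ∀ jj, g jj (xb d0) = 0 := hgzero (xb d0) (hxblin d0 hd0) (hbinary d0 hd0)
  rw [h𝒜]
  refine Set.mem_add.2 ⟨((fun jj => g jj (xb d0)), f (xb d0)),
    ⟨xb d0, fun i => hxbnn d0 i, rfl⟩,
    (0, p.2 - f (xb d0)), ⟨fun jj => le_rfl, show 0 ≤ p.2 - f (xb d0) by linarith⟩, ?_⟩
  have h1 : (fun jj => g jj (xb d0)) = (0 : Fin (4 * m + 2 * s) → ℝ) :=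
    funext fun jj => hgz jj
  refine Prod.ext ?_ ?_
  · show (fun jj => g jj (xb d0)) + 0 = p.1
    rw [h1, hp0, add_zero]
  · show f (xb d0) + (p.2 - f (xb d0)) = p.2
    ring
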